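/- arXiv:1007.3130 — 2 statements merged into one kernel-verified Lean document; each statement's English description precedes it below -/
import Mathlib

section
/- Let m be a positive natural number and W : Matrix (Fin m) (Fin m) ℝ with all entries nonnegative and every row sum at most 1. Assume I − W is invertible and that (I−W)⁻¹ has all entries nonnegative with every row of (I−W)⁻¹ having positive sum. For each index j, let ν_j : Fin m → ℝ be the j-th row of (I−W)⁻¹ normalized to sum to 1. For each j let W_j be the stochastic completion of W defined by W_j(x,y) = W(x,y) + (1 − ∑_z W(x,z)) if y = j and W_j(x,y) = W(x,y) otherwise. Then: (i) for each j, ν_j is a probability vector satisfying ν_j · W_j = ν_j; and (ii) for every row-stochastic matrix S with S(x,y) ≥ W(x,y) for all x, y, and every probability vector ν with ν · S = ν, it holds that min_j ν_j(x) ≤ ν(x) ≤ max_j ν_j(x) for every x. -/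
open Classical in
/-- Courtois–Semal-type bounds: the normalized rows `ν j` of `(I − W)⁻¹` are the
stationary distributions of the single-column stochastic completions `Wc j` of the
substochastic matrix `W`, and the stationary distribution of any stochastic completion
`S ≥ W` is bounded componentwise between the minimum and maximum of the `ν j`. -/
theorem courtois_semal_bounds
    (m : ℕ) (hm : 0 < m) (W : Matrix (Fin m) (Fin m) ℝ)
    (hWnn : ∀ x y, 0 ≤ W x y) (hWrow : ∀ x, ∑ y, W x y ≤ 1)
    (hinv : IsUnit (1 - W))
    (hinvnn : ∀ x y, 0 ≤ (1 - W)⁻¹ x y)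
    (hinvpos : ∀ x, 0 < ∑ y, (1 - W)⁻¹ x y)
    (ν : Fin m → Fin m → ℝ)
    (hν : ∀ j x, ν j x = (1 - W)⁻¹ j x / ∑ y, (1 - W)⁻¹ j y)
    (Wc : Fin m → Matrix (Fin m) (Fin m) ℝ)
    (hWc : ∀ j x y, Wc j x y = if y = j then W x y + (1 - ∑ z, W x z) else W x y) :
    (∀ j, (∀ x, 0 ≤ ν j x) ∧ (∑ x, ν j x = 1) ∧ (∀ y, ∑ x, ν j x * Wc j x y = ν j y)) ∧
      (∀ S : Matrix (Fin m) (Fin m) ℝ,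
        (∀ x y, 0 ≤ S x y) → (∀ x, ∑ y, S x y = 1) → (∀ x y, W x y ≤ S x y) →
        ∀ p : Fin m → ℝ, (∀ x, 0 ≤ p x) → (∑ x, p x = 1) →
          (∀ y, ∑ x, p x * S x y = p y) →
          ∀ x, (Finset.univ.inf' ⟨⟨0, hm⟩, Finset.mem_univ _⟩ fun j => ν j x) ≤ p x ∧
            p x ≤ (Finset.univ.sup' ⟨⟨0, hm⟩, Finset.mem_univ _⟩ fun j => ν j x)) := by
  set A := (1 - W)⁻¹ with hAdef
  have hdet : IsUnit (1 - W).det := (Matrix.isUnit_iff_isUnit_det _).mp hinv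
  have hmul : A * (1 - W) = 1 := Matrix.nonsing_inv_mul _ hdet
  have hmul' : (1 - W) * A = 1 := Matrix.mul_nonsing_inv _ hdet
  set s : Fin m → ℝ := fun j => ∑ y, A j y with hsdef
  have hs : ∀ j, 0 < s j := hinvpos
  have hsne : ∀ j, s j ≠ 0 := fun j => (hs j).ne'
  -- key identity from A(1-W)=1
  have key : ∀ j y, A j y - ∑ x, A j x * W x y = if j = y then 1 else 0 := by
    intro j y
    have h := congrFun (congrFun hmul j) y
    simp only [Matrix.mul_apply, Matrix.sub_apply, Matrix.one_apply, mul_sub,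
      Finset.sum_sub_distrib] at h
    simp only [mul_ite, mul_one, mul_zero, Finset.sum_ite_eq', Finset.mem_univ,
      if_true] at h
    exact h
  -- ν basic facts
  have hνnn : ∀ j x, 0 ≤ ν j x := fun j x => by
    rw [hν]; exact div_nonneg (hinvnn j x) (hs j).le
  have hνsum : ∀ j, ∑ x, ν j x = 1 := by
    intro j
    simp only [hν]
    rw [← Finset.sum_div, div_self (hsne j)]
  -- ν j · W identity
  have hνW : ∀ j y, ∑ x, ν j x * W x y = ν j y - (if j = y then 1 else 0) / s j := by
    intro j y
    have : ∑ x, ν j x * W x y = (∑ x, A j x * W x y) / s j := by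
      rw [Finset.sum_div]
      refine Finset.sum_congr rfl fun x _ => ?_
      rw [hν, div_mul_eq_mul_div]
    rw [this, hν, ← sub_div]
    congr 1
    have := key j y
    linarith
  -- part (i)
  have part1 : ∀ j, (∀ x, 0 ≤ ν j x) ∧ (∑ x, ν j x = 1) ∧
      (∀ y, ∑ x, ν j x * Wc j x y = ν j y) := by
    intro j
    refine ⟨hνnn j, hνsum j, fun y => ?_⟩
    have hslack : ∑ x, ν j x * (1 - ∑ z, W x z) = 1 / s j := by
      have h1 : ∑ x, ν j x * (1 - ∑ z, W x z)
          = (∑ x, ν j x) - ∑ x, ν j x * ∑ z, W x z := by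
        simp [mul_sub, Finset.sum_sub_distrib]
      have h2 : ∑ x, ν j x * ∑ z, W x z = ∑ z, ∑ x, ν j x * W x z := by
        rw [Finset.sum_comm]
        exact Finset.sum_congr rfl fun x _ => Finset.mul_sum _ _ _
      have h3 : ∑ z, ∑ x, ν j x * W x z = 1 - 1 / s j := by
        rw [Finset.sum_congr rfl fun z _ => hνW j z, Finset.sum_sub_distrib, hνsum j,
          ← Finset.sum_div, Finset.sum_ite_eq Finset.univ j fun _ => (1:ℝ),
          if_pos (Finset.mem_univ j)]
      rw [h1, h2, h3, hνsum j]
      ring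
    have hsplit : ∀ x, ν j x * Wc j x y
        = ν j x * W x y + ν j x * (if y = j then (1 - ∑ z, W x z) else 0) := by
      intro x
      rw [hWc]
      by_cases h : y = j <;> simp [h] <;> ring
    rw [Finset.sum_congr rfl fun x _ => hsplit x, Finset.sum_add_distrib, hνW j y]
    by_cases h : y = j
    · subst h
      have hc : ∀ x, ν y x * (if y = y then 1 - ∑ z, W x z else 0)
          = ν y x * (1 - ∑ z, W x z) := fun x => by rw [if_pos rfl]
      rw [Finset.sum_congr rfl fun x _ => hc x, hslack, if_pos rfl]
      ring
    · have : (if j = y then (1:ℝ) else 0) = 0 := by simp [Ne.symm h]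
      simp [h, this]
  refine ⟨part1, ?_⟩
  -- part (ii)
  intro S hSnn hSrow hSge p hpnn hpsum hpstat x
  set q : Fin m → ℝ := fun j => ∑ z, p z * (S z j - W z j) with hqdef
  have hqnn : ∀ j, 0 ≤ q j := fun j =>
    Finset.sum_nonneg fun z _ => mul_nonneg (hpnn z) (sub_nonneg.mpr (hSge z j))
  -- q j = ∑_x p x * (1-W) x j
  have hq1W : ∀ j, q j = ∑ z, p z * (1 - W) z j := by
    intro j
    have : ∑ z, p z * (1 - W) z j
        = (∑ z, p z * (if z = j then (1:ℝ) else 0)) - ∑ z, p z * W z j := by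
      simp [Matrix.sub_apply, Matrix.one_apply, mul_sub, Finset.sum_sub_distrib]
    rw [this]
    simp only [mul_ite, mul_one, mul_zero, Finset.sum_ite_eq', Finset.mem_univ, if_true]
    simp only [hqdef, mul_sub, Finset.sum_sub_distrib, hpstat j]
  -- p = q · A
  have hpqA : ∀ y, ∑ j, q j * A j y = p y := by
    intro y
    have h1 : ∑ j, q j * A j y = ∑ z, p z * ∑ j, (1 - W) z j * A j y := by
      rw [Finset.sum_congr rfl fun j _ => by rw [hq1W j, Finset.sum_mul]]
      rw [Finset.sum_comm]
      refine Finset.sum_congr rfl fun z _ => ?_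
      rw [Finset.mul_sum]
      exact Finset.sum_congr rfl fun j _ => by ring
    rw [h1]
    have h2 : ∀ z, ∑ j, (1 - W) z j * A j y = if z = y then 1 else 0 := by
      intro z
      have := congrFun (congrFun hmul' z) y
      simpa [Matrix.mul_apply, Matrix.one_apply] using this
    rw [Finset.sum_congr rfl fun z _ => by rw [h2 z]]
    simp only [mul_ite, mul_one, mul_zero, Finset.sum_ite_eq', Finset.mem_univ, if_true]
  set w : Fin m → ℝ := fun j => q j * s j with hwdef
  have hwnn : ∀ j, 0 ≤ w j := fun j => mul_nonneg (hqnn j) (hs j).le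
  have hAν : ∀ j y, A j y = s j * ν j y := by
    intro j y
    rw [hν, mul_div_cancel₀]
    exact hsne j
  have hpw : ∀ y, p y = ∑ j, w j * ν j y := by
    intro y
    rw [← hpqA y]
    refine Finset.sum_congr rfl fun j _ => ?_
    rw [hAν j y, hwdef]
    ring
  have hwsum : ∑ j, w j = 1 := by
    have : ∑ j, w j = ∑ j, ∑ y, q j * A j y := by
      refine Finset.sum_congr rfl fun j _ => ?_
      rw [hwdef]
      simp only [hsdef]
      rw [Finset.mul_sum]
    rw [this, Finset.sum_comm]
    rw [Finset.sum_congr rfl fun y _ => hpqA y]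
    exact hpsum
  have hne : (Finset.univ : Finset (Fin m)).Nonempty := ⟨⟨0, hm⟩, Finset.mem_univ _⟩
  constructor
  · calc (Finset.univ.inf' ⟨⟨0, hm⟩, Finset.mem_univ _⟩ fun j => ν j x)
        = ∑ j, w j * (Finset.univ.inf' ⟨⟨0, hm⟩, Finset.mem_univ _⟩ fun j => ν j x) := by
          rw [← Finset.sum_mul, hwsum, one_mul]
      _ ≤ ∑ j, w j * ν j x := by
          refine Finset.sum_le_sum fun j _ => ?_
          exact mul_le_mul_of_nonneg_left (Finset.inf'_le (fun j => ν j x) (Finset.mem_univ j)) (hwnn j)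
      _ = p x := (hpw x).symm
  · calc p x = ∑ j, w j * ν j x := hpw x
      _ ≤ ∑ j, w j * (Finset.univ.sup' ⟨⟨0, hm⟩, Finset.mem_univ _⟩ fun j => ν j x) := by
          refine Finset.sum_le_sum fun j _ => ?_
          exact mul_le_mul_of_nonneg_left (Finset.le_sup' (fun j => ν j x) (Finset.mem_univ j)) (hwnn j)
      _ = (Finset.univ.sup' ⟨⟨0, hm⟩, Finset.mem_univ _⟩ fun j => ν j x) := by
          rw [← Finset.sum_mul, hwsum, one_mul]
end

section
/- Let m be a natural number, P : Matrix (Fin m) (Fin m) ℝ a row-stochastic matrix (all entries nonnegative, every row sum equal to 1), and C a subset of Fin m with complement C̄. Write P[C,C], P[C,C̄], P[C̄,C], P[C̄,C̄] for the corresponding submatrices (indexed by the subtypes of C and C̄). Assume I − P[C̄,C̄] is invertible, and define the stochastic complement S = P[C,C] + P[C,C̄] · (I − P[C̄,C̄])⁻¹ · P[C̄,C]. Let π : Fin m → ℝ be a probability vector with π · P = π and ∑_{c ∈ C} π(c) > 0. Then: (i) S is row-stochastic; and (ii) the vector π_C on C defined by π_C(x) = π(x) / ∑_{c ∈ C} π(c)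 satisfies π_C · S = π_C. -/
open Matrix Finset Filter Topology

/-- Determinant of a continuously-varying matrix is continuous. -/
private lemma det_cont {n : Type*} [Fintype n] [DecidableEq n]
    (f : ℝ → Matrix n n ℝ) (h : ∀ i j, Continuous fun t => f t i j) :
    Continuous fun t => (f t).det := by
  simp_rw [Matrix.det_apply']
  exact continuous_finset_sum _ fun σ _ =>
    (continuous_const.mul (continuous_finset_prod _ fun i _ => h (σ i) i))

/-- `1 - t • E` is nonsingular for substochastic nonnegative `E` and `0 ≤ t < 1`. -/
private lemma unit_sub_smul {n : Type*} [Fintype n] [DecidableEq n]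
    (E : Matrix n n ℝ) (hnn : ∀ i j, 0 ≤ E i j) (hrow : ∀ i, ∑ j, E i j ≤ 1)
    {t : ℝ} (ht0 : 0 ≤ t) (ht1 : t < 1) : IsUnit (1 - t • E).det := by
  rw [isUnit_iff_ne_zero]
  intro hdet
  obtain ⟨v, hv, hmv⟩ := (Matrix.exists_mulVec_eq_zero_iff).mpr hdet
  obtain ⟨i0, hi0⟩ : ∃ i0, v i0 ≠ 0 := by
    by_contra h
    push_neg at h
    exact hv (funext h)
  obtain ⟨i, -, hi⟩ := Finset.exists_max_image Finset.univ (fun i => |v i|)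
    ⟨i0, mem_univ i0⟩
  have hvi : 0 < |v i| := lt_of_lt_of_le (abs_pos.mpr hi0) (hi i0 (mem_univ i0))
  have hmvi := congrFun hmv i
  simp only [Matrix.mulVec, dotProduct, Matrix.sub_apply, Matrix.one_apply,
    Matrix.smul_apply, smul_eq_mul, sub_mul, Pi.zero_apply] at hmvi
  rw [Finset.sum_sub_distrib] at hmvi
  have hvieq : v i = t * ∑ j, E i j * v j := by
    have h1 : ∑ j, (if i = j then (1:ℝ) else 0) * v j = v i := by
      simp [ite_mul]
    have h2 : ∑ j, t * E i j * v j = t * ∑ j, E i j * v j := by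
      rw [Finset.mul_sum]
      exact Finset.sum_congr rfl fun j _ => by ring
    rw [h1, h2] at hmvi
    linarith
  have hb : |v i| ≤ t * |v i| := by
    calc |v i| = t * |∑ j, E i j * v j| := by
          rw [hvieq, abs_mul, abs_of_nonneg ht0]
      _ ≤ t * ∑ j, E i j * |v j| := by
          refine mul_le_mul_of_nonneg_left ?_ ht0
          refine (Finset.abs_sum_le_sum_abs _ _).trans (le_of_eq ?_)
          refine Finset.sum_congr rfl fun j _ => ?_
          rw [abs_mul, abs_of_nonneg (hnn i j)]
      _ ≤ t * ∑ j, E i j * |v i| := by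
          refine mul_le_mul_of_nonneg_left ?_ ht0
          exact Finset.sum_le_sum fun j _ =>
            mul_le_mul_of_nonneg_left (hi j (mem_univ j)) (hnn i j)
      _ = t * ((∑ j, E i j) * |v i|) := by rw [← Finset.sum_mul]
      _ ≤ t * (1 * |v i|) := by
          refine mul_le_mul_of_nonneg_left ?_ ht0
          exact mul_le_mul_of_nonneg_right (hrow i) (abs_nonneg _)
      _ = t * |v i| := by ring
  nlinarith

/-- entries of `(1 - t • E)⁻¹` are nonnegative for `0 ≤ t < 1`. -/
private lemma inv_sub_smul_nonneg {n : Type*} [Fintype n] [DecidableEq n]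
    (E : Matrix n n ℝ) (hnn : ∀ i j, 0 ≤ E i j) (hrow : ∀ i, ∑ j, E i j ≤ 1)
    {t : ℝ} (ht0 : 0 ≤ t) (ht1 : t < 1) (i j : n) : 0 ≤ (1 - t • E)⁻¹ i j := by
  set N := (1 - t • E)⁻¹ with hN
  have hmul : (1 - t • E) * N = 1 :=
    Matrix.mul_nonsing_inv _ (unit_sub_smul E hnn hrow ht0 ht1)
  obtain ⟨i0, -, hi0⟩ := Finset.exists_min_image Finset.univ (fun k => N k j)
    ⟨i, mem_univ i⟩
  have key : 0 ≤ N i0 j := by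
    by_contra hneg
    push_neg at hneg
    have heq := congrFun (congrFun hmul i0) j
    simp only [Matrix.mul_apply, Matrix.sub_apply, Matrix.one_apply, Matrix.smul_apply,
      smul_eq_mul, sub_mul] at heq
    rw [Finset.sum_sub_distrib] at heq
    have h1 : ∑ k, (if i0 = k then (1:ℝ) else 0) * N k j = N i0 j := by simp [ite_mul]
    rw [h1] at heq
    have hge : ∑ k, t * E i0 k * N k j ≥ t * ((∑ k, E i0 k) * N i0 j) := by
      have hrw : t * ((∑ k, E i0 k) * N i0 j) = ∑ k, t * E i0 k * N i0 j := by
        rw [Finset.sum_mul, Finset.mul_sum]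
        exact Finset.sum_congr rfl fun k _ => by ring
      rw [ge_iff_le, hrw]
      refine Finset.sum_le_sum fun k _ => ?_
      have hc : 0 ≤ t * E i0 k := mul_nonneg ht0 (hnn i0 k)
      exact mul_le_mul_of_nonneg_left (hi0 k (mem_univ k)) hc
    have h2 : (∑ k, E i0 k) * N i0 j ≥ N i0 j := by
      nlinarith [hrow i0]
    have h3 : t * ((∑ k, E i0 k) * N i0 j) ≥ t * N i0 j :=
      mul_le_mul_of_nonneg_left h2 ht0
    have hone : (0:ℝ) ≤ (if i0 = j then (1:ℝ) else 0) := by positivity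
    nlinarith
  exact le_trans key (hi0 i (mem_univ i))

/-- entries of `(1 - E)⁻¹` are nonnegative for nonnegative substochastic `E`,
provided `1 - E` is a unit. -/
private lemma inv_one_sub_nonneg {n : Type*} [Fintype n] [DecidableEq n]
    (E : Matrix n n ℝ) (hnn : ∀ i j, 0 ≤ E i j) (hrow : ∀ i, ∑ j, E i j ≤ 1)
    (hu : IsUnit (1 - E)) (i j : n) : 0 ≤ (1 - E)⁻¹ i j := by
  have hdet : IsUnit (1 - E).det := (Matrix.isUnit_iff_isUnit_det _).mp hu
  have hdet0 : (1 - E).det ≠ 0 := hdet.ne_zero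
  -- entrywise formula for inverse via adjugate
  have hinvfml : ∀ t : ℝ, (1 - t • E)⁻¹ i j
      = ((1 - t • E).det)⁻¹ * (1 - t • E).adjugate i j := by
    intro t
    rw [Matrix.inv_def, Matrix.smul_apply, smul_eq_mul, Ring.inverse_eq_inv']
  have hcontE : ∀ a b : n, Continuous fun t : ℝ => (1 - t • E) a b := by
    intro a b
    simp only [Matrix.sub_apply, Matrix.one_apply, Matrix.smul_apply, smul_eq_mul]
    fun_prop
  have hdetcont : Continuous fun t : ℝ => (1 - t • E).det := det_cont _ hcontE
  have hadjcont : Continuous fun t : ℝ => (1 - t • E).adjugate i j := by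
    simp_rw [Matrix.adjugate_apply]
    refine det_cont _ fun a b => ?_
    have hupd : ∀ t : ℝ, ((1 - t • E).updateRow j (Pi.single i 1)) a b
        = if a = j then (Pi.single i 1 : n → ℝ) b else (1 - t • E) a b := by
      intro t
      by_cases h : a = j <;> simp [Matrix.updateRow_apply, h]
    simp_rw [hupd]
    by_cases h : a = j
    · simp only [h, if_true]
      exact continuous_const
    · simp only [h, if_false]
      exact hcontE a b
  have hone : (1 : Matrix n n ℝ) - (1:ℝ) • E = 1 - E := by rw [one_smul]
  have htend : Tendsto (fun t : ℝ => (1 - t • E)⁻¹ i j) (𝓝[<] (1:ℝ))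
      (𝓝 ((1 - E)⁻¹ i j)) := by
    simp_rw [hinvfml]
    have h1 : Tendsto (fun t : ℝ => (1 - t • E).det) (𝓝[<] (1:ℝ)) (𝓝 ((1 - E).det)) := by
      rw [← hone]
      exact (hdetcont.tendsto 1).mono_left nhdsWithin_le_nhds
    have h2 : Tendsto (fun t : ℝ => (1 - t • E).adjugate i j) (𝓝[<] (1:ℝ))
        (𝓝 ((1 - E).adjugate i j)) := by
      rw [← hone]
      exact (hadjcont.tendsto 1).mono_left nhdsWithin_le_nhds
    have := (h1.inv₀ hdet0).mul h2
    rw [Matrix.inv_def, Matrix.smul_apply, smul_eq_mul, Ring.inverse_eq_inv']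
    exact this
  refine ge_of_tendsto htend ?_
  filter_upwards [Ioo_mem_nhdsLT_of_mem (Set.mem_Ioc.mpr ⟨zero_lt_one, le_refl 1⟩)]
    with t ht
  exact inv_sub_smul_nonneg E hnn hrow (le_of_lt ht.1) ht.2 i j

open Classical in
/-- Meyer's stochastic complementation theorem (finite case): the stochastic complement
`S = P[C,C] + P[C,C̄](I − P[C̄,C̄])⁻¹P[C̄,C]` of a set `C` of states of a finite Markov
chain with row-stochastic transition matrix `P` is row-stochastic, and the stationary
distribution of `P` conditioned on `C` is stationary for `S`. -/
theorem stochastic_complement_stationary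
    (m : ℕ) (P : Matrix (Fin m) (Fin m) ℝ)
    (hPnn : ∀ x y, 0 ≤ P x y) (hProw : ∀ x, ∑ y, P x y = 1)
    (C : Set (Fin m))
    (hinv : IsUnit
      (1 - P.submatrix (Subtype.val : {x // x ∉ C} → Fin m)
        (Subtype.val : {x // x ∉ C} → Fin m)))
    (S : Matrix {x // x ∈ C} {x // x ∈ C} ℝ)
    (hS : S = P.submatrix (Subtype.val : {x // x ∈ C} → Fin m)
          (Subtype.val : {x // x ∈ C} → Fin m)
        + P.submatrix (Subtype.val : {x // x ∈ C} → Fin m)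
            (Subtype.val : {x // x ∉ C} → Fin m)
          * (1 - P.submatrix (Subtype.val : {x // x ∉ C} → Fin m)
              (Subtype.val : {x // x ∉ C} → Fin m))⁻¹
          * P.submatrix (Subtype.val : {x // x ∉ C} → Fin m)
              (Subtype.val : {x // x ∈ C} → Fin m))
    (π : Fin m → ℝ) (hπnn : ∀ x, 0 ≤ π x) (hπ1 : ∑ x, π x = 1)
    (hπstat : ∀ y, ∑ x, π x * P x y = π y)
    (hπC : 0 < ∑ c : {x // x ∈ C}, π c) :
    ((∀ x y : {x // x ∈ C}, 0 ≤ S x y) ∧ (∀ x : {x // x ∈ C}, ∑ y, S x y = 1)) ∧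
      (∀ y : {x // x ∈ C},
        ∑ x : {x // x ∈ C}, (π x / ∑ c : {x // x ∈ C}, π c) * S x y
          = π y / ∑ c : {x // x ∈ C}, π c) := by
  set A := P.submatrix (Subtype.val : {x // x ∈ C} → Fin m)
      (Subtype.val : {x // x ∈ C} → Fin m) with hA
  set B := P.submatrix (Subtype.val : {x // x ∈ C} → Fin m)
      (Subtype.val : {x // x ∉ C} → Fin m) with hB
  set D := P.submatrix (Subtype.val : {x // x ∉ C} → Fin m)
      (Subtype.val : {x // x ∈ C} → Fin m) with hD
  set E := P.submatrix (Subtype.val : {x // x ∉ C} → Fin m)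
      (Subtype.val : {x // x ∉ C} → Fin m) with hE
  set N := (1 - E)⁻¹ with hN
  -- splitting sums over C and its complement
  have hsplit : ∀ f : Fin m → ℝ,
      (∑ x : {x // x ∈ C}, f x) + (∑ x : {x // x ∉ C}, f x) = ∑ x, f x := fun f =>
    Fintype.sum_subtype_add_sum_subtype (fun x => x ∈ C) f
  have hEnn : ∀ i j, 0 ≤ E i j := fun i j => hPnn i.val j.val
  have hDnn : ∀ i j, 0 ≤ D i j := fun i j => hPnn i.val j.val
  have hDErow : ∀ z : {x // x ∉ C}, (∑ y : {x // x ∈ C}, D z y) + ∑ w, E z w = 1 := by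
    intro z
    have h := hsplit (fun y => P z.val y)
    rw [hProw z.val] at h
    simpa [hD, hE] using h
  have hErow : ∀ i, ∑ j, E i j ≤ 1 := by
    intro i
    have h := hDErow i
    have : 0 ≤ ∑ y : {x // x ∈ C}, D i y :=
      Finset.sum_nonneg fun y _ => hDnn i y
    linarith
  have hdet : IsUnit (1 - E).det := (Matrix.isUnit_iff_isUnit_det _).mp hinv
  have hNmul : N * (1 - E) = 1 := Matrix.nonsing_inv_mul _ hdet
  have hmulN : (1 - E) * N = 1 := Matrix.mul_nonsing_inv _ hdet
  have hNnn : ∀ i j, 0 ≤ N i j := inv_one_sub_nonneg E hEnn hErow hinv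
  -- (i) nonnegativity of S
  have hSnn : ∀ x y : {x // x ∈ C}, 0 ≤ S x y := by
    intro x y
    rw [hS]
    simp only [Matrix.add_apply, Matrix.mul_apply]
    refine add_nonneg (hPnn _ _) (Finset.sum_nonneg fun w _ => ?_)
    refine mul_nonneg (Finset.sum_nonneg fun z _ => ?_) (hDnn w y)
    exact mul_nonneg (hPnn _ _) (hNnn z w)
  -- (i) rows of S sum to 1, via mulVec with the all-ones vector
  have honesD : D.mulVec (fun _ => (1:ℝ)) = (1 - E).mulVec (fun _ => (1:ℝ)) := by
    funext z
    simp only [Matrix.mulVec, dotProduct, mul_one, Matrix.sub_apply, Matrix.one_apply]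
    rw [Finset.sum_sub_distrib]
    simp only [Finset.sum_ite_eq, Finset.mem_univ, if_true]
    have := hDErow z
    linarith
  have hND : N.mulVec (D.mulVec (fun _ => (1:ℝ))) = (fun _ => (1:ℝ)) := by
    rw [honesD, Matrix.mulVec_mulVec, hNmul]
    funext w
    simp [Matrix.mulVec, dotProduct, Matrix.one_apply]
  have hSrow : ∀ x : {x // x ∈ C}, ∑ y, S x y = 1 := by
    intro x
    have hsum : ∑ y, S x y = (S.mulVec (fun _ => (1:ℝ))) x := by
      simp [Matrix.mulVec, dotProduct]
    rw [hsum, hS, Matrix.add_mulVec, Matrix.mul_assoc, ← Matrix.mulVec_mulVec,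
      ← Matrix.mulVec_mulVec, hND]
    simp only [Pi.add_apply]
    have hBrow : (B.mulVec (fun _ => (1:ℝ))) x = ∑ w : {x // x ∉ C}, B x w := by
      simp [Matrix.mulVec, dotProduct]
    have hArow : (A.mulVec (fun _ => (1:ℝ))) x = ∑ y : {x // x ∈ C}, A x y := by
      simp [Matrix.mulVec, dotProduct]
    rw [hArow, hBrow]
    have h := hsplit (fun y => P x.val y)
    rw [hProw x.val] at h
    simpa [hA, hB] using h
  refine ⟨⟨hSnn, hSrow⟩, ?_⟩
  -- (ii) stationarity
  set πC : {x // x ∈ C} → ℝ := fun x => π x.val with hπCdef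
  set πb : {x // x ∉ C} → ℝ := fun x => π x.val with hπbdef
  have hstatC : ∀ y : {x // x ∈ C}, (πC ᵥ* A) y + (πb ᵥ* D) y = πC y := by
    intro y
    have h := hsplit (fun x => π x * P x y.val)
    rw [hπstat y.val] at h
    simpa [Matrix.vecMul, dotProduct, hA, hD, hπCdef, hπbdef] using h
  have hstatb : ∀ y : {x // x ∉ C}, (πC ᵥ* B) y + (πb ᵥ* E) y = πb y := by
    intro y
    have h := hsplit (fun x => π x * P x y.val)
    rw [hπstat y.val] at h
    simpa [Matrix.vecMul, dotProduct, hB, hE, hπCdef, hπbdef] using h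
  have hπbeq : πb = πC ᵥ* (B * N) := by
    have h1 : πb ᵥ* (1 - E) = πC ᵥ* B := by
      funext y
      simp only [Matrix.vecMul_sub, Matrix.vecMul_one, Pi.sub_apply]
      have := hstatb y
      linarith
    calc πb = πb ᵥ* 1 := by rw [Matrix.vecMul_one]
      _ = πb ᵥ* ((1 - E) * N) := by rw [hmulN]
      _ = (πb ᵥ* (1 - E)) ᵥ* N := by rw [Matrix.vecMul_vecMul]
      _ = (πC ᵥ* B) ᵥ* N := by rw [h1]
      _ = πC ᵥ* (B * N) := by rw [Matrix.vecMul_vecMul]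
  have hstatS : ∀ y : {x // x ∈ C}, (πC ᵥ* S) y = πC y := by
    intro y
    rw [hS]
    have : πC ᵥ* (A + B * N * D) = πC ᵥ* A + (πC ᵥ* (B * N)) ᵥ* D := by
      rw [Matrix.vecMul_add, ← Matrix.vecMul_vecMul]
    rw [this, ← hπbeq]
    simp only [Pi.add_apply]
    exact hstatC y
  intro y
  have hsum : ∑ x : {x // x ∈ C}, (π x / ∑ c : {x // x ∈ C}, π c) * S x y
      = (∑ x : {x // x ∈ C}, π x * S x y) / ∑ c : {x // x ∈ C}, π c := by
    rw [Finset.sum_div]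
    exact Finset.sum_congr rfl fun x _ => by ring
  rw [hsum]
  have : ∑ x : {x // x ∈ C}, π x.val * S x y = π y.val := by
    have := hstatS y
    simpa [Matrix.vecMul, dotProduct, hπCdef] using this
  rw [this]
end
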